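/- arXiv:1205.1421 — 2 statements merged into one kernel-verified Lean document; each statement's English description precedes it below -/
import Mathlib

section
/- Let U : ℝ⁵ → ℝ be a positive C² function. For x ∈ ℝ⁵ and λ > 0, define the Kelvin transform U^{λ,x}(y) = (λ/|y−x|)^{3} · U(x + λ²(y−x)/|y−x|²). If U(y) ≥ U^{λ,x}(y) for all x ∈ ℝ⁵, all λ > 0, and all y with |y−x| ≥ λ, then U is constant. -/
noncomputable def kelvin (U : EuclideanSpace ℝ (Fin 5) → ℝ) (x : EuclideanSpace ℝ (Fin 5))
    (l : ℝ) (y : EuclideanSpace ℝ (Fin 5)) : ℝ :=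
  (l / ‖y - x‖) ^ 3 * U (x + (l ^ 2 / ‖y - x‖ ^ 2) • (y - x))

/-- A positive C² function on ℝ⁵ dominating all of its Kelvin transforms is constant. -/
theorem stmt0 (U : EuclideanSpace ℝ (Fin 5) → ℝ) (hU : ContDiff ℝ 2 U)
    (hpos : ∀ y, 0 < U y)
    (hdom : ∀ (x : EuclideanSpace ℝ (Fin 5)) (l : ℝ), 0 < l →
      ∀ y, l ≤ ‖y - x‖ → kelvin U x l y ≤ U y) :
    ∃ c : ℝ, ∀ y, U y = c := by
  have hdiff : Differentiable ℝ U := hU.differentiable (by norm_num)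
  -- Key inequality: for all y and w ≠ 0, 0 ≤ 3 U y + 2 (fderiv U y) w
  have hkey : ∀ (y w : EuclideanSpace ℝ (Fin 5)), w ≠ 0 →
      0 ≤ 3 * U y + 2 * (fderiv ℝ U y) w := by
    intro y w hw
    set r : ℝ := ‖w‖ with hrdef
    have hr : 0 < r := norm_pos_iff.mpr hw
    have hr' : r ≠ 0 := ne_of_gt hr
    set D := fderiv ℝ U y with hD
    set h : ℝ → ℝ := fun ε => ((r - ε)/r)^3 * U (y - ((ε*(2*r - ε))/r^2) • w) with hhdef
    -- h ε ≤ U y for ε ∈ Ioo 0 r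
    have hmem : ∀ ε ∈ Set.Ioo (0:ℝ) r, h ε ≤ U y := by
      intro ε hε
      have hsc : (r - ε)^2/r^2 = 1 - (ε*(2*r - ε))/r^2 := by
        field_simp; ring
      have harg : (y - w) + ((r - ε)^2/r^2) • w = y - ((ε*(2*r - ε))/r^2) • w := by
        rw [hsc]; module
      have hle : ((r - ε)/r)^3 * U ((y - w) + ((r - ε)^2/r^2) • w) ≤ U y := by
        have := hdom (y - w) (r - ε) (by linarith [hε.2]) y
          (by simp only [sub_sub_cancel, ← hrdef]; linarith [hε.1])
        simpa [kelvin, sub_sub_cancel, ← hrdef] using this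
      rw [harg] at hle
      exact hle
    -- derivative computations
    have hφ : HasDerivAt (fun ε : ℝ => ((r - ε)/r)^3)
        (3 * ((r - 0)/r)^2 * ((0 - 1)/r)) 0 := by
      exact (((hasDerivAt_const (0:ℝ) r).sub (hasDerivAt_id 0)).div_const r).pow 3
    have hφ2 : HasDerivAt (fun ε : ℝ => (ε*(2*r - ε))/r^2)
        ((1*(2*r - 0) + 0*(0 - 1))/r^2) 0 := by
      exact ((hasDerivAt_id 0).mul ((hasDerivAt_const (0:ℝ) (2*r)).sub (hasDerivAt_id 0))).div_const _
    have hψ : HasDerivAt (fun ε : ℝ => y - ((ε*(2*r - ε))/r^2) • w)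
        (-(((1*(2*r - 0) + 0*(0 - 1))/r^2) • w)) 0 := (hφ2.smul_const w).const_sub y
    have hψ0 : (fun ε : ℝ => y - ((ε*(2*r - ε))/r^2) • w) 0 = y := by simp
    have hDy : HasFDerivAt U D ((fun ε : ℝ => y - ((ε*(2*r - ε))/r^2) • w) 0) := by
      rw [hψ0]; exact (hdiff y).hasFDerivAt
    have hcomp : HasDerivAt (fun ε : ℝ => U (y - ((ε*(2*r - ε))/r^2) • w))
        (D (-(((1*(2*r - 0) + 0*(0 - 1))/r^2) • w))) 0 := hDy.comp_hasDerivAt 0 hψ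
    have hh : HasDerivAt h
        ((3 * ((r - 0)/r)^2 * ((0 - 1)/r)) * U (y - (((0:ℝ)*(2*r - 0))/r^2) • w)
          + (((r - 0)/r)^3) * D (-(((1*(2*r - 0) + 0*(0 - 1))/r^2) • w)) ) 0 := hφ.mul hcomp
    set d : ℝ := (3 * ((r - 0)/r)^2 * ((0 - 1)/r)) * U (y - (((0:ℝ)*(2*r - 0))/r^2) • w)
          + (((r - 0)/r)^3) * D (-(((1*(2*r - 0) + 0*(0 - 1))/r^2) • w)) with hddef
    -- h 0 = U y
    have hh0 : h 0 = U y := by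
      simp [hhdef, div_self hr']
    -- slope argument: d ≤ 0
    have hslope : Filter.Tendsto (slope h 0) (nhdsWithin 0 (Set.Ioi 0)) (nhds d) := by
      refine (hasDerivAt_iff_tendsto_slope.mp hh).mono_left
        (nhdsWithin_mono 0 ?_)
      intro x hx
      exact ne_of_gt hx
    have hev : ∀ᶠ ε in nhdsWithin (0:ℝ) (Set.Ioi 0), slope h 0 ε ≤ 0 := by
      filter_upwards [Ioo_mem_nhdsGT_of_mem ⟨le_refl (0:ℝ), hr⟩] with ε hε
      rw [slope_def_field]
      have h1 : h ε ≤ U y := hmem ε hε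
      have h2 : (h ε - h 0) ≤ 0 := by rw [hh0]; linarith
      have h3 : (0:ℝ) < ε - 0 := by simpa using hε.1
      exact div_nonpos_of_nonpos_of_nonneg (by simpa [div_eq_mul_inv] using h2) (le_of_lt h3)
    have hd0 : d ≤ 0 := le_of_tendsto hslope hev
    -- compute d
    have hval : d = -(3 * U y + 2 * D w)/r := by
      rw [hddef]
      simp only [map_neg, map_smul, smul_eq_mul, zero_mul, mul_zero, zero_div, zero_smul,
        sub_zero]
      field_simp
      ring
    rw [hval] at hd0
    have := (div_le_iff₀ hr).mp hd0
    linarith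
  -- fderiv vanishes everywhere
  have hzero : ∀ y, fderiv ℝ U y = 0 := by
    intro y
    ext w
    simp only [ContinuousLinearMap.zero_apply]
    by_contra hne
    have hw : w ≠ 0 := by
      intro h0
      rw [h0, map_zero] at hne
      exact hne rfl
    have hDw : (fderiv ℝ U y) w ≠ 0 := hne
    set t : ℝ := -(3 * U y + 1)/(2 * (fderiv ℝ U y) w) with htdef
    have ht : t ≠ 0 := by
      apply div_ne_zero
      · have := hpos y; intro hc; nlinarith
      · simpa using hDw
    have := hkey y (t • w) (smul_ne_zero ht hw)
    rw [map_smul, smul_eq_mul] at this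
    have htw : t * (fderiv ℝ U y) w = -(3 * U y + 1)/2 := by
      rw [htdef]; field_simp
    rw [htw] at this
    linarith
  refine ⟨U 0, fun y => ?_⟩
  exact is_const_of_fderiv_eq_zero hdiff hzero y 0
end

section
/- Let v : ℝ⁵ → ℝ be a positive C¹ function and define, in polar-type form, f(r, θ) = r^{3/2} v(rθ) for r > 0 and θ on the unit sphere S⁴. Suppose there exist r₀ > 0 and C > 0 such that ∂_r f(r, θ) > C r^{1/2} for all 0 < r < r₀ and all θ ∈ S⁴. Then for all λ, y with 0 < λ < |y| < r₀, writing y^λ = λ² y / |y|² and v^λ(y) = (λ/|y|)³ v(y^λ), one has v(y) − v^λ(y) ≥ C'' (|y| − λ) for some constant C'' > 0 depending only on C and r₀. -/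
theorem stmt5 (v : EuclideanSpace ℝ (Fin 5) → ℝ) (hv : ContDiff ℝ 1 v)
    (hpos : ∀ y, 0 < v y) (r₀ C lam0 : ℝ) (hr₀ : 0 < r₀) (hC : 0 < C) (hlam0 : 0 < lam0)
    (hderiv : ∀ θ : EuclideanSpace ℝ (Fin 5), ‖θ‖ = 1 → ∀ r : ℝ, 0 < r → r < r₀ →
      C * r ^ ((1 : ℝ) / 2) < deriv (fun s : ℝ => s ^ ((3 : ℝ) / 2) * v (s • θ)) r) :
    ∃ C'' > (0 : ℝ), ∀ (l : ℝ) (y : EuclideanSpace ℝ (Fin 5)),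
      lam0 ≤ l → l < ‖y‖ → ‖y‖ < r₀ →
      C'' * (‖y‖ - l) ≤ v y - (l / ‖y‖) ^ 3 * v ((l ^ 2 / ‖y‖ ^ 2) • y) := by
  refine ⟨C * lam0 / r₀ ^ 2, by positivity, ?_⟩
  intro l y hl hly hyr
  have hl0 : 0 < l := lt_of_lt_of_le hlam0 hl
  have hR0 : 0 < ‖y‖ := hl0.trans hly
  set R := ‖y‖ with hRdef
  set θ : EuclideanSpace ℝ (Fin 5) := R⁻¹ • y with hθdef
  have hθ : ‖θ‖ = 1 := by
    rw [hθdef, norm_smul, norm_inv, Real.norm_eq_abs, abs_of_pos hR0, ← hRdef,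
      inv_mul_cancel₀ hR0.ne']
  set s₁ := l ^ 2 / R with hs₁def
  have hs₁0 : 0 < s₁ := by positivity
  have hs₁l : s₁ < l := by rw [hs₁def, div_lt_iff₀ hR0]; nlinarith
  have hs₁R : s₁ < R := hs₁l.trans hly
  set g : ℝ → ℝ := fun s => s ^ ((3 : ℝ) / 2) * v (s • θ) with hgdef
  have hcont : ContinuousOn g (Set.Icc s₁ R) := by
    apply Continuous.continuousOn
    apply Continuous.mul
    · exact continuous_iff_continuousAt.2 fun x =>
        Real.continuousAt_rpow_const x _ (Or.inr (by norm_num))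
    · exact hv.continuous.comp (continuous_id.smul continuous_const)
  have hdiff : DifferentiableOn ℝ g (interior (Set.Icc s₁ R)) := by
    rw [interior_Icc]
    intro x hx
    have hx0 : 0 < x := hs₁0.trans hx.1
    apply DifferentiableAt.differentiableWithinAt
    apply DifferentiableAt.mul
    · exact Real.differentiableAt_rpow_const_of_ne _ hx0.ne'
    · exact ((hv.differentiable one_ne_zero) _).comp x (differentiableAt_id.smul_const θ)
  have hmain : C * s₁ ^ ((1 : ℝ) / 2) * (R - s₁) ≤ g R - g s₁ := by
    apply Convex.mul_sub_le_image_sub_of_le_deriv (convex_Icc s₁ R) hcont hdiff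
    · intro x hx
      rw [interior_Icc] at hx
      have hx0 : 0 < x := hs₁0.trans hx.1
      have hxr : x < r₀ := hx.2.trans hyr
      have h2 := hderiv θ hθ x hx0 hxr
      refine le_trans ?_ h2.le
      have := Real.rpow_le_rpow hs₁0.le hx.1.le (by norm_num : (0:ℝ) ≤ (1:ℝ)/2)
      nlinarith
    · exact ⟨le_refl _, hs₁R.le⟩
    · exact ⟨hs₁R.le, le_refl _⟩
    · exact hs₁R.le
  have hgR : g R = R ^ ((3 : ℝ) / 2) * v y := by
    rw [hgdef]
    simp only [hθdef, smul_smul, mul_inv_cancel₀ hR0.ne', one_smul]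
  have hgs₁ : g s₁ = s₁ ^ ((3 : ℝ) / 2) * v ((l ^ 2 / R ^ 2) • y) := by
    rw [hgdef]
    simp only [hθdef, smul_smul]
    congr 3
    rw [hs₁def]
    field_simp
  set a := R ^ ((3 : ℝ) / 2) with hadef
  have ha0 : 0 < a := Real.rpow_pos_of_pos hR0 _
  have hl3 : (l ^ 2) ^ ((3 : ℝ) / 2) = l ^ 3 := by
    rw [← Real.rpow_natCast l 2, ← Real.rpow_mul hl0.le, ← Real.rpow_natCast l 3]
    norm_num
  have hRR : a * a = R ^ 3 := by
    rw [hadef, ← Real.rpow_add hR0, ← Real.rpow_natCast R 3]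
    norm_num
  have hmulR : s₁ ^ ((3 : ℝ) / 2) * a = l ^ 3 := by
    rw [hadef, ← Real.mul_rpow hs₁0.le hR0.le, hs₁def, div_mul_cancel₀ _ hR0.ne', hl3]
  have hs₁pow : s₁ ^ ((3 : ℝ) / 2) = a * (l / R) ^ 3 := by
    rw [div_pow, ← mul_div_assoc, eq_div_iff (by positivity : (R:ℝ) ^ 3 ≠ 0)]
    calc s₁ ^ ((3 : ℝ) / 2) * R ^ 3 = s₁ ^ ((3 : ℝ) / 2) * a * a := by
          rw [mul_assoc, hRR]
      _ = l ^ 3 * a := by rw [hmulR]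
      _ = a * l ^ 3 := by ring
  have hDE : g R - g s₁ = a * (v y - (l / R) ^ 3 * v ((l ^ 2 / R ^ 2) • y)) := by
    rw [hgR, hgs₁, hs₁pow]; ring
  -- scalar identities
  have hr₀half : (0:ℝ) < r₀ ^ ((1 : ℝ) / 2) := Real.rpow_pos_of_pos hr₀ _
  have hb : r₀ ^ ((1 : ℝ) / 2) * r₀ ^ ((3 : ℝ) / 2) = r₀ ^ 2 := by
    rw [← Real.rpow_add hr₀, ← Real.rpow_natCast r₀ 2]
    norm_num
  have hq : (lam0 ^ 2 / r₀) ^ ((1 : ℝ) / 2) = lam0 / r₀ ^ ((1 : ℝ) / 2) := by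
    rw [Real.div_rpow (by positivity) hr₀.le]
    congr 1
    rw [← Real.rpow_natCast lam0 2, ← Real.rpow_mul hlam0.le]
    norm_num
  have hc1 : lam0 / r₀ ^ 2 * r₀ ^ ((3 : ℝ) / 2) = lam0 / r₀ ^ ((1 : ℝ) / 2) := by
    rw [div_mul_eq_mul_div, div_eq_div_iff (by positivity) hr₀half.ne']
    linear_combination lam0 * hb
  have ha_le : a ≤ r₀ ^ ((3 : ℝ) / 2) :=
    Real.rpow_le_rpow hR0.le hyr.le (by norm_num)
  have hq2 : lam0 ^ 2 / r₀ ≤ s₁ := by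
    rw [hs₁def]
    exact div_le_div₀ (by positivity) (by nlinarith) hR0 hyr.le
  have hK_ge : lam0 / r₀ ^ ((1 : ℝ) / 2) ≤ s₁ ^ ((1 : ℝ) / 2) := by
    rw [← hq]
    exact Real.rpow_le_rpow (by positivity) hq2 (by norm_num)
  have hRl : (0:ℝ) ≤ R - l := by linarith
  have hfinal : C * lam0 / r₀ ^ 2 * (R - l) * a ≤ C * s₁ ^ ((1 : ℝ) / 2) * (R - s₁) := by
    calc C * lam0 / r₀ ^ 2 * (R - l) * a
        ≤ C * lam0 / r₀ ^ 2 * (R - l) * r₀ ^ ((3 : ℝ) / 2) := by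
          have h0 : (0:ℝ) ≤ C * lam0 / r₀ ^ 2 * (R - l) :=
            mul_nonneg (by positivity) hRl
          exact mul_le_mul_of_nonneg_left ha_le h0
      _ = C * (lam0 / r₀ ^ 2 * r₀ ^ ((3 : ℝ) / 2)) * (R - l) := by ring
      _ = C * (lam0 / r₀ ^ ((1 : ℝ) / 2)) * (R - l) := by rw [hc1]
      _ ≤ C * s₁ ^ ((1 : ℝ) / 2) * (R - l) := by
          have h := mul_le_mul_of_nonneg_left hK_ge hC.le
          exact mul_le_mul_of_nonneg_right h hRl
      _ ≤ C * s₁ ^ ((1 : ℝ) / 2) * (R - s₁) := by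
          have h0 : (0:ℝ) ≤ C * s₁ ^ ((1 : ℝ) / 2) := by positivity
          exact mul_le_mul_of_nonneg_left (by linarith [hs₁l]) h0
  have h5 : a * (C * lam0 / r₀ ^ 2 * (R - l)) ≤
      a * (v y - (l / R) ^ 3 * v ((l ^ 2 / R ^ 2) • y)) := by
    rw [← hDE]
    calc a * (C * lam0 / r₀ ^ 2 * (R - l)) = C * lam0 / r₀ ^ 2 * (R - l) * a := by ring
      _ ≤ C * s₁ ^ ((1 : ℝ) / 2) * (R - s₁) := hfinal
      _ ≤ g R - g s₁ := hmain
  exact le_of_mul_le_mul_left h5 ha0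
end
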